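/- If C_1 and C_2 are distinct circuits of a matroid M with |C_1 △ C_2| = 2, then D = C_1 ∪ C_2 is a double circuit of M, and the two singleton sets C_1 \ C_2 and C_2 \ C_1 are singular classes of its circuit partition. -/

import Mathlib

open Set Matroid

namespace Paper

variable {α : Type*}

/-- A circuit of a matroid: a minimal dependent set. -/
def IsCircuit (M : Matroid α) (C : Set α) : Prop :=
  M.Dep C ∧ ∀ x ∈ C, M.Indep (C \ {x})

/-- The rank of a set: the largest cardinality of an independent subset. -/
noncomputable def rk (M : Matroid α) (X : Set α) : ℕ :=
  sSup {n : ℕ | ∃ I, I ⊆ X ∧ M.Indep I ∧ I.ncard = n}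

/-- A double circuit: a (finite) set `D` with `r(D) = |D| - 2` such that deleting any
single element does not decrease the rank. -/
def DoubleCircuit (M : Matroid α) (D : Set α) : Prop :=
  D ⊆ M.E ∧ D.Finite ∧ rk M D + 2 = D.ncard ∧ ∀ d ∈ D, rk M (D \ {d}) = rk M D

/-- `P` is the circuit partition of `D`: a partition of `D` into nonempty classes such
that the circuits of `M` contained in `D` are exactly the complements (in `D`) of the
classes. -/
def IsCircuitPartition (M : Matroid α) (D : Set α) (P : Set (Set α)) : Prop :=
  (∀ p ∈ P, p.Nonempty) ∧ (∀ p ∈ P, p ⊆ D) ∧ (∀ d ∈ D, ∃! p, p ∈ P ∧ d ∈ p) ∧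
    ∀ C, (IsCircuit M C ∧ C ⊆ D) ↔ ∃ p ∈ P, C = D \ p

/-- A positive double circuit: one whose circuit partition has strictly more singular
(size-one) classes than multiple classes. -/
def PositiveDoubleCircuit (M : Matroid α) (D : Set α) : Prop :=
  DoubleCircuit M D ∧ ∃ P, IsCircuitPartition M D P ∧
    {p ∈ P | p.ncard ≠ 1}.ncard < {p ∈ P | p.ncard = 1}.ncard

/-- A hyperplane (copoint): a maximal proper flat. -/
def IsHyperplane (M : Matroid α) (H : Set α) : Prop :=
  M.IsFlat H ∧ H ≠ M.E ∧ ∀ F, M.IsFlat F → H ⊂ F → F = M.E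

/-- A coline: a flat of codimension two. -/
def IsColine (M : Matroid α) (L : Set α) : Prop :=
  M.IsFlat L ∧ rk M L + 2 = rk M M.E

/-- `P` is the copoint partition of the coline `L`: a partition of `M.E \ L` such that
the hyperplanes containing `L` are exactly the sets `L ∪ p` for classes `p`. -/
def IsCopointPartition (M : Matroid α) (L : Set α) (P : Set (Set α)) : Prop :=
  (∀ p ∈ P, p.Nonempty) ∧ (∀ p ∈ P, p ⊆ M.E \ L) ∧ (∀ d ∈ M.E \ L, ∃! p, p ∈ P ∧ d ∈ p) ∧
    ∀ H, (IsHyperplane M H ∧ L ⊆ H) ↔ ∃ p ∈ P, H = L ∪ p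

/-- A positive coline: one whose copoint partition has strictly more singular (size-one)
classes than multiple classes. -/
def PositiveColine (M : Matroid α) (L : Set α) : Prop :=
  IsColine M L ∧ ∃ P, IsCopointPartition M L P ∧
    {p ∈ P | p.ncard ≠ 1}.ncard < {p ∈ P | p.ncard = 1}.ncard

/-- A simple matroid: no loops and no parallel pairs. -/
def SimpleM (M : Matroid α) : Prop :=
  (∀ e ∈ M.E, M.Indep {e}) ∧ ∀ e f, e ∈ M.E → f ∈ M.E → e ≠ f → M.Indep {e, f}

/-- A coloop: an element contained in every base. -/
def IsColoop (M : Matroid α) (e : α) : Prop :=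
  e ∈ M.E ∧ ∀ B, M.IsBase B → e ∈ B

open Classical in
/-- The permutation of `α` exchanging `e` and `f`. -/
noncomputable def swapMap (e f : α) (x : α) : α :=
  if x = e then f else if x = f then e else x

/-- `e` and `f` are clones in `M` if exchanging them is an automorphism of `M`. -/
def Clones (M : Matroid α) (e f : α) : Prop :=
  e ∈ M.E ∧ f ∈ M.E ∧ ∀ I, M.Indep I ↔ M.Indep (swapMap e f '' I)

/-- Contraction of a set, defined by duality with deletion. -/
noncomputable def contract (M : Matroid α) (C : Set α) : Matroid α := (M✶ ↾ (M.E \ C))✶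

/-- Deletion of a set. -/
noncomputable def delete (M : Matroid α) (D : Set α) : Matroid α := M ↾ (M.E \ D)

/-- `N` is a minor of `M`. -/
def IsMinorOf (N M : Matroid α) : Prop :=
  ∃ C D, C ⊆ M.E ∧ D ⊆ M.E ∧ Disjoint C D ∧ N = Paper.delete (contract M C) D


lemma rk_eq_of {M : Matroid α} {X I : Set α} (hI : M.Indep I) (hIX : I ⊆ X)
    (hub : ∀ J, J ⊆ X → M.Indep J → J.ncard ≤ I.ncard) : rk M X = I.ncard := by
  have hubS : ∀ n ∈ {n : ℕ | ∃ I, I ⊆ X ∧ M.Indep I ∧ I.ncard = n}, n ≤ I.ncard := by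
    rintro n ⟨J, hJX, hJ, rfl⟩; exact hub J hJX hJ
  exact le_antisymm (csSup_le ⟨I.ncard, I, hIX, hI, rfl⟩ hubS)
    (le_csSup ⟨I.ncard, hubS⟩ ⟨I, hIX, hI, rfl⟩)

/-- if `C₁ ≠ C₂` are circuits with `|C₁ △ C₂| = 2`, then `C₁ ∪ C₂` is a
double circuit whose circuit partition has `C₁ \ C₂` and `C₂ \ C₁` as singular
classes. -/
theorem union_of_close_circuits_is_double_circuit {α : Type*} (M : Matroid α)
    [M.Finite] (C₁ C₂ : Set α) (h₁ : IsCircuit M C₁) (h₂ : IsCircuit M C₂)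
    (hne : C₁ ≠ C₂) (hsd : (symmDiff C₁ C₂).ncard = 2) :
    DoubleCircuit M (C₁ ∪ C₂) ∧
      ∀ P, IsCircuitPartition M (C₁ ∪ C₂) P →
        (C₁ \ C₂) ∈ P ∧ (C₂ \ C₁) ∈ P ∧
          (C₁ \ C₂).ncard = 1 ∧ (C₂ \ C₁).ncard = 1 := by
  obtain ⟨hd₁, hmin₁⟩ := h₁
  obtain ⟨hd₂, hmin₂⟩ := h₂
  have hC₁E := hd₁.subset_ground
  have hC₂E := hd₂.subset_ground
  have hf₁ : C₁.Finite := M.ground_finite.subset hC₁E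
  have hf₂ : C₂.Finite := M.ground_finite.subset hC₂E
  have hfD : (C₁ ∪ C₂).Finite := hf₁.union hf₂
  have hnsub : ∀ A B : Set α, M.Dep A → (∀ x ∈ B, M.Indep (B \ {x})) → A ≠ B → ¬ A ⊆ B := by
    intro A B hA hB hAB hsub
    obtain ⟨x, hxB, hxA⟩ := exists_of_ssubset (ssubset_of_subset_of_ne hsub hAB)
    exact hA.not_indep ((hB x hxB).subset fun y hy => ⟨hsub hy, fun h => hxA (h ▸ hy)⟩)
  have hane : (C₁ \ C₂).Nonempty := diff_nonempty.mpr (hnsub C₁ C₂ hd₁ hmin₂ hne)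
  have hbne : (C₂ \ C₁).Nonempty := diff_nonempty.mpr (hnsub C₂ C₁ hd₂ hmin₁ (Ne.symm hne))
  have hsum : (C₁ \ C₂).ncard + (C₂ \ C₁).ncard = 2 := by
    rw [← Set.ncard_union_eq disjoint_sdiff_sdiff hf₁.diff hf₂.diff, ← Set.symmDiff_def]
    exact hsd
  have hpa : 0 < (C₁ \ C₂).ncard := (Set.ncard_pos hf₁.diff).mpr hane
  have hpb : 0 < (C₂ \ C₁).ncard := (Set.ncard_pos hf₂.diff).mpr hbne
  have ha1 : (C₁ \ C₂).ncard = 1 := by omega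
  have hb1 : (C₂ \ C₁).ncard = 1 := by omega
  obtain ⟨a, ha⟩ := Set.ncard_eq_one.mp ha1
  obtain ⟨b, hb⟩ := Set.ncard_eq_one.mp hb1
  have haC : a ∈ C₁ \ C₂ := by rw [ha]; exact mem_singleton a
  have hbC : b ∈ C₂ \ C₁ := by rw [hb]; exact mem_singleton b
  set I0 := C₁ ∩ C₂ with hI0
  have hI0fin : I0.Finite := hf₁.subset inter_subset_left
  have haC₁ : C₁ \ {a} = I0 := by rw [← ha, diff_diff_right_self]
  have hbC₂ : C₂ \ {b} = I0 := by rw [← hb, diff_diff_right_self, inter_comm]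
  have hI0indep : M.Indep I0 := haC₁ ▸ hmin₁ a haC.1
  have haI0 : a ∉ I0 := fun h => haC.2 h.2
  have hbI0 : b ∉ I0 := fun h => hbC.2 h.1
  have hC₁eq : C₁ = insert a I0 := by
    rw [← haC₁, insert_diff_singleton, insert_eq_self.mpr haC.1]
  have hC₂eq : C₂ = insert b I0 := by
    rw [← hbC₂, insert_diff_singleton, insert_eq_self.mpr hbC.1]
  have hDeq : C₁ ∪ C₂ = insert a (insert b I0) := by
    rw [hC₁eq, hC₂eq]; ext x; simp only [mem_union, mem_insert_iff]; tauto
  have hC₁card : C₁.ncard = I0.ncard + 1 := by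
    rw [hC₁eq, Set.ncard_insert_of_notMem haI0 hI0fin]
  have hC₂card : C₂.ncard = I0.ncard + 1 := by
    rw [hC₂eq, Set.ncard_insert_of_notMem hbI0 hI0fin]
  have hab : a ≠ b := fun h => haC.2 (h ▸ hbC.1)
  have hDcard : (C₁ ∪ C₂).ncard = I0.ncard + 2 := by
    rw [hDeq, Set.ncard_insert_of_notMem (by simp [hab, haI0]) (hI0fin.insert b),
      Set.ncard_insert_of_notMem hbI0 hI0fin]
  -- key: deleting any single element of D leaves a dependent set
  have hkey : ∀ x ∈ C₁ ∪ C₂, ¬ M.Indep ((C₁ ∪ C₂) \ {x}) := by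
    intro x hx hind
    by_cases hx₁ : x ∈ I0
    · have hcard : I0.encard < ((C₁ ∪ C₂) \ {x}).encard := by
        rw [← hI0fin.cast_ncard_eq, ← (hfD.diff).cast_ncard_eq, Nat.cast_lt,
          Set.ncard_diff_singleton_of_mem hx, hDcard]
        omega
      obtain ⟨e, he, hins⟩ := hI0indep.augment hind hcard
      have heD : e ∈ C₁ ∪ C₂ := he.1.1
      have : e = a ∨ e = b := by
        rw [hDeq] at heD
        rcases heD with h | h
        · exact Or.inl h
        · rcases h with h | h
          · exact Or.inr h
          · exact absurd h he.2
      rcases this with rfl | rfl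
      · exact hd₁.not_indep (hC₁eq ▸ hins)
      · exact hd₂.not_indep (hC₂eq ▸ hins)
    · have hxab : x = a ∨ x = b := by
        rw [hDeq] at hx
        rcases hx with h | h | h
        · exact Or.inl h
        · exact Or.inr h
        · exact absurd h hx₁
      rcases hxab with rfl | rfl
      · exact hd₂.not_indep (hind.subset fun y hy => ⟨Or.inr hy, fun h => haC.2 (h ▸ hy)⟩)
      · exact hd₁.not_indep (hind.subset fun y hy => ⟨Or.inl hy, fun h => hbC.2 (h ▸ hy)⟩)
  -- every independent subset of D has at most |I0| elements
  have hub : ∀ J, J ⊆ C₁ ∪ C₂ → M.Indep J → J.ncard ≤ I0.ncard := by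
    intro J hJD hJ
    by_contra hlt
    push_neg at hlt
    have hJle : J.ncard ≤ (C₁ ∪ C₂).ncard := Set.ncard_le_ncard hJD hfD
    have hdiff : ((C₁ ∪ C₂) \ J).ncard = (C₁ ∪ C₂).ncard - J.ncard :=
      Set.ncard_diff hJD (hfD.subset hJD)
    have hle1 : ((C₁ ∪ C₂) \ J).ncard ≤ 1 := by omega
    interval_cases h : ((C₁ ∪ C₂) \ J).ncard
    · have hempty : (C₁ ∪ C₂) \ J = ∅ := (Set.ncard_eq_zero hfD.diff).mp h
      have hDJ : C₁ ∪ C₂ ⊆ J := diff_eq_empty.mp hempty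
      exact hd₁.not_indep (hJ.subset fun y hy => hDJ (Or.inl hy))
    · obtain ⟨x, hx⟩ := Set.ncard_eq_one.mp h
      have hxD : x ∈ C₁ ∪ C₂ := by
        have : x ∈ (C₁ ∪ C₂) \ J := by rw [hx]; exact mem_singleton x
        exact this.1
      have hJeq : J = (C₁ ∪ C₂) \ {x} := by
        rw [← hx, diff_diff_cancel_left hJD]
      exact hkey x hxD (hJeq ▸ hJ)
  have hrkD : rk M (C₁ ∪ C₂) = I0.ncard :=
    rk_eq_of hI0indep (inter_subset_left.trans subset_union_left) hub
  have hrkDel : ∀ d ∈ C₁ ∪ C₂, rk M ((C₁ ∪ C₂) \ {d}) = I0.ncard := by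
    intro d hd
    by_cases hdI : d ∈ I0
    · have hK : M.Indep (C₁ \ {d}) := hmin₁ d hdI.1
      have hKcard : (C₁ \ {d}).ncard = I0.ncard := by
        rw [Set.ncard_diff_singleton_of_mem hdI.1, hC₁card]; omega
      have := rk_eq_of hK
        (diff_subset_diff_left subset_union_left)
        (fun J hJ hJi => hKcard ▸ hub J (hJ.trans diff_subset) hJi)
      rw [this, hKcard]
    · have hI0sub : I0 ⊆ (C₁ ∪ C₂) \ {d} := by
        intro y hy
        exact ⟨Or.inl hy.1, fun h => hdI (mem_singleton_iff.mp h ▸ hy)⟩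
      exact rk_eq_of hI0indep hI0sub (fun J hJ hJi => hub J (hJ.trans diff_subset) hJi)
  constructor
  · exact ⟨union_subset hC₁E hC₂E, hfD, by omega, fun d hd => by rw [hrkDel d hd, hrkD]⟩
  · intro P hP
    obtain ⟨hPne, hPsub, hPuniq, hPiff⟩ := hP
    obtain ⟨p, hpP, hpeq⟩ := (hPiff C₂).mp ⟨⟨hd₂, hmin₂⟩, subset_union_right⟩
    obtain ⟨q, hqP, hqeq⟩ := (hPiff C₁).mp ⟨⟨hd₁, hmin₁⟩, subset_union_left⟩
    have hp : C₁ \ C₂ = p := by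
      have h1 : (C₁ ∪ C₂) \ ((C₁ ∪ C₂) \ p) = p := diff_diff_cancel_left (hPsub p hpP)
      rw [← hpeq, union_diff_right] at h1
      exact h1
    have hq : C₂ \ C₁ = q := by
      have h1 : (C₁ ∪ C₂) \ ((C₁ ∪ C₂) \ q) = q := diff_diff_cancel_left (hPsub q hqP)
      rw [← hqeq, union_diff_left] at h1
      exact h1
    exact ⟨hp ▸ hpP, hq ▸ hqP, ha1, hb1⟩


end Paper
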